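/- Lower bound on the concave objective (from the proof of Lemma 3.2): for θ₀, θ ∈ ℝ^Λ and α ∈ ℝ^Λ, define F(θ) = Σ_λ θ_λ α_λ − H(θ) with H(θ) = ∫_E f_θ dμ, set α_{0,λ} = ∫_E f_{θ₀} ψ_λ dμ and b = exp(‖log f_{θ₀}‖_∞). Then F(θ₀) − F(θ) ≥ (1/(2b))·e^{−A‖θ₀−θ‖₂}·‖θ₀ − θ‖₂² − ‖α₀ − α‖₂·‖θ₀ − θ‖₂. -/

import Mathlib

open MeasureTheory

lemma phi_nonneg {y : ℝ} (hy : 0 ≤ y) : 0 ≤ 1 - y^2/2 - (1-y)*Real.exp y := by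
  set f : ℝ → ℝ := fun y => 1 - y^2/2 - (1-y)*Real.exp y with hf
  have hderiv : ∀ t : ℝ, HasDerivAt f (t * (Real.exp t - 1)) t := by
    intro t
    have h1 : HasDerivAt (fun y : ℝ => 1 - y^2/2) (-t) t := by
      have := ((hasDerivAt_pow 2 t).div_const 2).const_sub 1
      simpa using this.congr_deriv (by ring)
    have h2 : HasDerivAt (fun y : ℝ => (1-y)*Real.exp y) (-t * Real.exp t) t := by
      have := ((hasDerivAt_id t).const_sub 1).mul (Real.hasDerivAt_exp t)
      exact this.congr_deriv (by simp [id]; ring)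
    exact (h1.sub h2).congr_deriv (by ring)
  have hmono : MonotoneOn f (Set.Ici (0:ℝ)) := by
    refine monotoneOn_of_deriv_nonneg (convex_Ici 0)
      (Continuous.continuousOn (by fun_prop)) ?_ ?_
    · intro t _
      exact (hderiv t).differentiableAt.differentiableWithinAt
    · intro t ht
      simp only [interior_Ici, Set.mem_Ioi] at ht
      rw [(hderiv t).deriv]
      have : 1 ≤ Real.exp t := Real.one_le_exp ht.le
      nlinarith
  have := hmono (Set.self_mem_Ici) hy hy
  simpa [f] using this

lemma exp_quad_lower (x : ℝ) : Real.exp (-|x|) * x^2 / 2 ≤ Real.exp x - 1 - x := by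
  rcases le_or_gt 0 x with hx | hx
  · rw [abs_of_nonneg hx]
    have h1 := Real.quadratic_le_exp_of_nonneg hx
    have h2 : Real.exp (-x) ≤ 1 := Real.exp_le_one_iff.mpr (by linarith)
    nlinarith [sq_nonneg x, Real.exp_pos (-x)]
  · rw [abs_of_neg hx]
    have hy := phi_nonneg (y := -x) (by linarith)
    have hme : Real.exp (-x) * Real.exp x = 1 := by
      rw [← Real.exp_add]; simp
    simp only [neg_neg] at *
    nlinarith [Real.exp_pos x, Real.exp_pos (-x)]

theorem concave_objective_lower_bound
    {E : Type*} [MeasurableSpace E] (μ : Measure E) [IsFiniteMeasure μ]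
    {Λ : Type*} [Fintype Λ] [DecidableEq Λ] (ψ : Λ → E → ℝ)
    (hmeas : ∀ l, Measurable (ψ l))
    (hbdd : ∀ l, ∃ C : ℝ, ∀ x, |ψ l x| ≤ C)
    (horth : ∀ l k, ∫ x, ψ l x * ψ k x ∂μ = if l = k then (1 : ℝ) else 0)
    (A : ℝ) (hApos : 0 < A)
    (hA : ∀ c : Λ → ℝ, ∀ x, |∑ l, c l * ψ l x| ≤
      A * Real.sqrt (∫ y, (∑ l, c l * ψ l y) ^ 2 ∂μ))
    (θ₀ θ : Λ → ℝ) (α : Λ → ℝ) :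
    (1 / (2 * Real.exp (⨆ x, |∑ l, θ₀ l * ψ l x|))) *
        Real.exp (-(A * Real.sqrt (∑ l, (θ₀ l - θ l) ^ 2))) * (∑ l, (θ₀ l - θ l) ^ 2) -
      Real.sqrt (∑ l,
          ((∫ x, Real.exp (∑ l', θ₀ l' * ψ l' x) * ψ l x ∂μ) - α l) ^ 2) *
        Real.sqrt (∑ l, (θ₀ l - θ l) ^ 2) ≤
      ((∑ l, θ₀ l * α l) - ∫ x, Real.exp (∑ l, θ₀ l * ψ l x) ∂μ) -
        ((∑ l, θ l * α l) - ∫ x, Real.exp (∑ l, θ l * ψ l x) ∂μ) := by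
  classical
  obtain ⟨d, hd⟩ : ∃ d : Λ → ℝ, ∀ l, d l = θ₀ l - θ l := ⟨_, fun _ => rfl⟩
  obtain ⟨g₀, hg₀⟩ : ∃ g₀ : E → ℝ, ∀ x, g₀ x = ∑ l, θ₀ l * ψ l x := ⟨_, fun _ => rfl⟩
  obtain ⟨g, hg⟩ : ∃ g : E → ℝ, ∀ x, g x = ∑ l, θ l * ψ l x := ⟨_, fun _ => rfl⟩
  obtain ⟨u, hu⟩ : ∃ u : E → ℝ, ∀ x, u x = ∑ l, d l * ψ l x := ⟨_, fun _ => rfl⟩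
  simp only [← hd, ← hg₀, ← hg]
  choose C hC using hbdd
  -- u = g₀ - g
  have hug : ∀ x, u x = g₀ x - g x := by
    intro x
    simp [hu, hg₀, hg, hd, sub_mul, Finset.sum_sub_distrib]
  -- measurability
  have hmg₀ : Measurable g₀ := by
    have : g₀ = fun x => ∑ l, θ₀ l * ψ l x := funext hg₀
    rw [this]; exact Finset.measurable_sum _ fun l _ => (hmeas l).const_mul _
  have hmg : Measurable g := by
    have : g = fun x => ∑ l, θ l * ψ l x := funext hg
    rw [this]; exact Finset.measurable_sum _ fun l _ => (hmeas l).const_mul _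
  have hmu : Measurable u := by
    have : u = fun x => ∑ l, d l * ψ l x := funext hu
    rw [this]; exact Finset.measurable_sum _ fun l _ => (hmeas l).const_mul _
  -- boundedness
  have keybound : ∀ (c : Λ → ℝ) x, |∑ l, c l * ψ l x| ≤ ∑ l, |c l| * C l := by
    intro c x
    refine (Finset.abs_sum_le_sum_abs _ _).trans (Finset.sum_le_sum fun l _ => ?_)
    rw [abs_mul]
    exact mul_le_mul_of_nonneg_left (hC l x) (abs_nonneg _)
  have hK₀ : ∀ x, |g₀ x| ≤ ∑ l, |θ₀ l| * C l := fun x => (hg₀ x) ▸ keybound θ₀ x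
  have hKg : ∀ x, |g x| ≤ ∑ l, |θ l| * C l := fun x => (hg x) ▸ keybound θ x
  have hKu : ∀ x, |u x| ≤ ∑ l, |d l| * C l := fun x => (hu x) ▸ keybound d x
  set K₀ := ∑ l, |θ₀ l| * C l with hK₀def
  set Kg := ∑ l, |θ l| * C l with hKgdef
  set Ku := ∑ l, |d l| * C l with hKudef
  -- integrability helper
  have integ : ∀ (f : E → ℝ) (K : ℝ), Measurable f → (∀ x, |f x| ≤ K) → Integrable f μ := by
    intro f K hm hK
    exact (integrable_const K).mono' hm.aestronglyMeasurable
      (Filter.Eventually.of_forall (by simpa [Real.norm_eq_abs] using hK))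
  have habs_exp : ∀ (f : E → ℝ) (K : ℝ), (∀ x, |f x| ≤ K) →
      ∀ x, |Real.exp (f x)| ≤ Real.exp K := by
    intro f K hK x
    rw [abs_of_pos (Real.exp_pos _)]
    exact Real.exp_le_exp.mpr ((le_abs_self _).trans (hK x))
  have int_expg₀ : Integrable (fun x => Real.exp (g₀ x)) μ :=
    integ _ (Real.exp K₀) (hmg₀.exp) (habs_exp _ _ hK₀)
  have int_expg : Integrable (fun x => Real.exp (g x)) μ :=
    integ _ (Real.exp Kg) (hmg.exp) (habs_exp _ _ hKg)
  have int_expg₀u : Integrable (fun x => Real.exp (g₀ x) * u x) μ := by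
    refine integ _ (Real.exp K₀ * (Real.exp K₀ + Ku)) (hmg₀.exp.mul hmu) (fun x => ?_)
    rw [abs_mul]
    have h1 := habs_exp _ _ hK₀ x
    have h2 := hKu x
    have : |u x| ≤ Real.exp K₀ + Ku := by
      have : (0:ℝ) < Real.exp K₀ := Real.exp_pos _
      linarith
    exact mul_le_mul h1 this (abs_nonneg _) (Real.exp_pos _).le
  have int_expg₀ψ : ∀ l, Integrable (fun x => Real.exp (g₀ x) * ψ l x) μ := by
    intro l
    refine integ _ (Real.exp K₀ * (Real.exp K₀ + |C l|)) (hmg₀.exp.mul (hmeas l)) (fun x => ?_)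
    rw [abs_mul]
    have h1 := habs_exp _ _ hK₀ x
    have h2 := (hC l x).trans (le_abs_self _)
    have : |ψ l x| ≤ Real.exp K₀ + |C l| := by
      have : (0:ℝ) < Real.exp K₀ := Real.exp_pos _
      linarith
    exact mul_le_mul h1 this (abs_nonneg _) (Real.exp_pos _).le
  have int_ψψ : ∀ (a : ℝ) l k, Integrable (fun x => a * (ψ l x * ψ k x)) μ := by
    intro a l k
    refine integ _ (|a| * (|C l| * |C k|)) (((hmeas l).mul (hmeas k)).const_mul a) (fun x => ?_)
    rw [abs_mul, abs_mul]
    refine mul_le_mul_of_nonneg_left ?_ (abs_nonneg _)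
    exact mul_le_mul ((hC l x).trans (le_abs_self _)) ((hC k x).trans (le_abs_self _))
      (abs_nonneg _) (abs_nonneg _)
  have int_u2 : Integrable (fun x => (u x)^2) μ := by
    refine integ _ ((Ku + 1)^2) ((hmu.pow_const 2)) (fun x => ?_)
    rw [abs_pow]
    have h2 := hKu x
    have h0 : (0:ℝ) ≤ |u x| := abs_nonneg _
    have : |u x| ≤ Ku + 1 := by linarith
    exact pow_le_pow_left₀ h0 this 2
  -- ∫ u² = ∑ d²
  set s := ∑ l, d l ^ 2 with hsdef
  have hs0 : 0 ≤ s := Finset.sum_nonneg fun l _ => sq_nonneg _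
  have hintu2 : ∫ x, (u x)^2 ∂μ = s := by
    have expand : ∀ x, (u x)^2 = ∑ l, ∑ k, (d l * d k) * (ψ l x * ψ k x) := by
      intro x
      rw [hu, sq, Finset.sum_mul_sum]
      exact Finset.sum_congr rfl fun l _ => Finset.sum_congr rfl fun k _ => by ring
    calc ∫ x, (u x)^2 ∂μ
        = ∑ l, ∫ x, ∑ k, (d l * d k) * (ψ l x * ψ k x) ∂μ := by
          simp_rw [expand]
          exact integral_finset_sum _ fun l _ =>
            integrable_finset_sum _ fun k _ => int_ψψ _ l k
      _ = ∑ l, ∑ k, (d l * d k) * ∫ x, ψ l x * ψ k x ∂μ := by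
          refine Finset.sum_congr rfl fun l _ => ?_
          rw [integral_finset_sum _ fun k _ => int_ψψ _ l k]
          exact Finset.sum_congr rfl fun k _ => integral_const_mul _ _
      _ = s := by
          simp only [horth, mul_ite, mul_one, mul_zero]
          simp only [Finset.sum_ite_eq, Finset.mem_univ, if_true]
          rw [hsdef]
          exact Finset.sum_congr rfl fun l _ => (sq (d l)).symm
  -- pointwise bound on u
  have hAu : ∀ x, |u x| ≤ A * Real.sqrt s := by
    intro x
    have := hA d x
    simp only [← hu] at this
    rwa [hintu2] at this
  -- the constant
  set B := ⨆ x, |g₀ x| with hBdef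
  set c := 1 / (2 * Real.exp B) * Real.exp (-(A * Real.sqrt s)) with hcdef
  -- pointwise key inequality
  have hpt : ∀ x, c * (u x)^2 ≤ Real.exp (g x) - Real.exp (g₀ x) + Real.exp (g₀ x) * u x := by
    intro x
    have hBx : |g₀ x| ≤ B := by
      refine le_ciSup (f := fun x => |g₀ x|) ⟨K₀, ?_⟩ x
      rintro _ ⟨y, rfl⟩
      exact hK₀ y
    have e1 : Real.exp (-B) ≤ Real.exp (g₀ x) :=
      Real.exp_le_exp.mpr (by cases abs_le.mp hBx; linarith)
    have e2 : Real.exp (-(A * Real.sqrt s)) ≤ Real.exp (-|u x|) :=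
      Real.exp_le_exp.mpr (by linarith [hAu x])
    have e12 : Real.exp (-B) * Real.exp (-(A * Real.sqrt s)) ≤
        Real.exp (g₀ x) * Real.exp (-|u x|) :=
      mul_le_mul e1 e2 (Real.exp_pos _).le (Real.exp_pos _).le
    have P1 : Real.exp (-B) * Real.exp (-(A * Real.sqrt s)) * (u x)^2 ≤
        Real.exp (g₀ x) * Real.exp (-|u x|) * (u x)^2 :=
      mul_le_mul_of_nonneg_right e12 (sq_nonneg _)
    have key := exp_quad_lower (-(u x))
    rw [abs_neg, neg_sq] at key
    have P2 : Real.exp (g₀ x) * (Real.exp (-|u x|) * (u x)^2 / 2) ≤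
        Real.exp (g₀ x) * (Real.exp (-(u x)) - 1 + u x) :=
      mul_le_mul_of_nonneg_left (by linarith) (Real.exp_pos _).le
    have hgg : Real.exp (g x) = Real.exp (g₀ x) * Real.exp (-(u x)) := by
      rw [← Real.exp_add, hug]; ring_nf
    have hBe : Real.exp (-B) = 1 / Real.exp B := by rw [Real.exp_neg]; ring
    rw [hcdef, hgg]
    rw [hBe] at P1
    have hh : 1/(2*Real.exp B) * Real.exp (-(A*Real.sqrt s)) * u x^2
        = (1/Real.exp B * Real.exp (-(A*Real.sqrt s)) * u x^2)/2 := by ring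
    have hh2 : Real.exp (g₀ x) * (Real.exp (-|u x|) * u x^2 / 2)
        = Real.exp (g₀ x) * Real.exp (-|u x|) * u x^2 / 2 := by ring
    have hh3 : Real.exp (g₀ x) * (Real.exp (-(u x)) - 1 + u x)
        = Real.exp (g₀ x) * Real.exp (-(u x)) - Real.exp (g₀ x) + Real.exp (g₀ x) * u x := by ring
    linarith [P1, P2]
  -- integrate
  have int_lhs : Integrable (fun x => c * (u x)^2) μ := int_u2.const_mul c
  have i1 : Integrable (fun x => Real.exp (g x) - Real.exp (g₀ x)) μ :=
    int_expg.sub int_expg₀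
  have int_rhs : Integrable
      (fun x => (Real.exp (g x) - Real.exp (g₀ x)) + Real.exp (g₀ x) * u x) μ :=
    i1.add int_expg₀u
  have hI := integral_mono int_lhs int_rhs hpt
  rw [integral_add i1 int_expg₀u,
    integral_sub int_expg int_expg₀, integral_const_mul, hintu2] at hI
  -- α₀ dot product
  have hdot : ∫ x, Real.exp (g₀ x) * u x ∂μ
      = ∑ l, d l * ∫ x, Real.exp (g₀ x) * ψ l x ∂μ := by
    have expand : ∀ x, Real.exp (g₀ x) * u x = ∑ l, d l * (Real.exp (g₀ x) * ψ l x) := by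
      intro x
      rw [hu, Finset.mul_sum]
      exact Finset.sum_congr rfl fun l _ => by ring
    simp_rw [expand]
    rw [integral_finset_sum _ fun l _ => (int_expg₀ψ l).const_mul _]
    exact Finset.sum_congr rfl fun l _ => integral_const_mul _ _
  -- Cauchy–Schwarz
  obtain ⟨α₀, hα₀⟩ : ∃ α₀ : Λ → ℝ, ∀ l, α₀ l = ∫ x, Real.exp (g₀ x) * ψ l x ∂μ :=
    ⟨_, fun _ => rfl⟩
  simp only [← hα₀] at hdot ⊢
  have hCS : -(Real.sqrt (∑ l, (α₀ l - α l)^2) * Real.sqrt s) ≤ ∑ l, d l * (α l - α₀ l) := by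
    have h := Finset.sum_mul_sq_le_sq_mul_sq Finset.univ (fun l => α₀ l - α l) d
    have habs : |∑ l, (α₀ l - α l) * d l| ≤
        Real.sqrt (∑ l, (α₀ l - α l)^2) * Real.sqrt s := by
      rw [← Real.sqrt_sq_eq_abs, ← Real.sqrt_mul (Finset.sum_nonneg fun l _ => sq_nonneg _)]
      exact Real.sqrt_le_sqrt h
    have heq : ∑ l, d l * (α l - α₀ l) = -(∑ l, (α₀ l - α l) * d l) := by
      rw [← Finset.sum_neg_distrib]
      exact Finset.sum_congr rfl fun l _ => by ring
    rw [heq]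
    exact neg_le_neg (le_of_abs_le habs)
  have hsplit : ∑ l, d l * α l = (∑ l, θ₀ l * α l) - ∑ l, θ l * α l := by
    simp [hd, sub_mul, Finset.sum_sub_distrib]
  have hsplit2 : ∑ l, d l * (α l - α₀ l) = (∑ l, d l * α l) - ∑ l, d l * α₀ l := by
    simp [mul_sub, Finset.sum_sub_distrib]
  linarith [hI, hCS, hsplit, hsplit2]
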